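/- (a) For every j ∈ ℤ/nℤ and every measurable S ⊆ Σ, one has μ̃_{η,j}(σ̂⁻¹(S) ∩ {ε : ε₀ ≠ 1}) = |λ_{η(j)}|² · μ̃_{η,j+1}(S). (b) The measure μ_η is a probability measure on Σ and an eigenmeasure of the open shift with decay rate Λ_η, i.e. μ_η(σ̂⁻¹(S) ∩ {ε : ε₀ ≠ 1}) = Λ_η·μ_η(S) for every measurable S ⊆ Σ. -/

import Mathlib

open MeasureTheory
open scoped ENNReal

/-- The two-sided shift on `Σ = {0,1,2}^ℤ`. -/
def shiftMap (ε : ℤ → Fin 3) : ℤ → Fin 3 := fun n => ε (n + 1)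

/-- `μ` is the product measure on `{0,1,2}^ℤ` with one-site weights `P n` at coordinate `n`. -/
def IsProductMeasure (μ : Measure (ℤ → Fin 3)) (P : ℤ → Fin 3 → ℝ) : Prop :=
  ∀ (s : Finset ℤ) (g : ℤ → Fin 3),
    μ {ε | ∀ i ∈ s, ε i = g i} = ∏ i ∈ s, ENNReal.ofReal (P i (g i))

/-- The 3×3 discrete Fourier transform. -/
noncomputable def dft3 : Matrix (Fin 3) (Fin 3) ℂ := fun j k =>
  (((Real.sqrt 3)⁻¹ : ℝ) : ℂ) *
    Complex.exp (-2 * Real.pi * Complex.I * ((j : ℕ) : ℂ) * ((k : ℕ) : ℂ) / 3)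

/-- The orthogonal projection of `ℂ³` onto `span(e₀,e₂)`. -/
def pi02 : Matrix (Fin 3) (Fin 3) ℂ := fun i j => if i = j ∧ i ≠ 1 then 1 else 0

/-- The matrix `F̃₃* = F₃* ∘ π₀₂`. -/
noncomputable def F3tilde : Matrix (Fin 3) (Fin 3) ℂ := dft3.conjTranspose * pi02

/-- The weight `P(e) = |v(e)|²`. -/
noncomputable def Pweight (v : Fin 3 → ℂ) (e : Fin 3) : ℝ := ‖v e‖ ^ 2

/-- The weight `P*(e) = |(F₃v)(e)|²`. -/
noncomputable def PstarWeight (v : Fin 3 → ℂ) (e : Fin 3) : ℝ :=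
  ‖dft3.mulVec v e‖ ^ 2

/-- The fraction `t(η)` of symbols `+` in `η`. -/
noncomputable def tplus (n : ℕ) (hn : 0 < n) (η : ZMod n → Bool) : ℝ :=
  haveI : NeZero n := ⟨hn.ne'⟩
  ((Finset.univ.filter fun j => η j = true).card : ℝ) / n

/-- The decay rate `Λ_η = |λ₋|^{2(1-t(η))}·|λ₊|^{2t(η)}`. -/
noncomputable def LamEta (lp lm : ℂ) (n : ℕ) (hn : 0 < n) (η : ZMod n → Bool) : ℝ :=
  ‖lm‖ ^ (2 * (1 - tplus n hn η)) * ‖lp‖ ^ (2 * tplus n hn η)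

/-- The coefficient `C_{η,j} = Π_{m<j} (|λ_{η(m)}|²/Λ_η)`. -/
noncomputable def Cweight (lp lm : ℂ) (n : ℕ) (hn : 0 < n) (η : ZMod n → Bool)
    (j : ZMod n) : ℝ :=
  haveI : NeZero n := ⟨hn.ne'⟩
  ∏ m ∈ Finset.range j.val,
    (‖if η (m : ZMod n) then lp else lm‖ ^ 2 / LamEta lp lm n hn η)

/-- The family `μ̃_{η,j}`: each `μt j` is the product probability measure whose factor at
coordinate `m ∈ ℤ` is `P_{η(j+m)}` if `m ≥ 0` and `P*_{η(j+m)}` if `m < 0`. -/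
def IsTildeFamily (vp vm : Fin 3 → ℂ) (n : ℕ) (hn : 0 < n) (η : ZMod n → Bool)
    (μt : ZMod n → Measure (ℤ → Fin 3)) : Prop :=
  ∀ j : ZMod n, IsProbabilityMeasure (μt j) ∧
    IsProductMeasure (μt j) (fun m e =>
      if 0 ≤ m then Pweight (if η (j + (m : ZMod n)) then vp else vm) e
      else PstarWeight (if η (j + (m : ZMod n)) then vp else vm) e)

/-- The eigenmeasure `μ_η = 𝒩_η⁻¹ Σ_j C_{η,j} μ̃_{η,j}`. -/
noncomputable def muEta (lp lm : ℂ) (n : ℕ) (hn : 0 < n) (η : ZMod n → Bool)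
    (μt : ZMod n → Measure (ℤ → Fin 3)) : Measure (ℤ → Fin 3) :=
  haveI : NeZero n := ⟨hn.ne'⟩
  (ENNReal.ofReal (∑ j : ZMod n, Cweight lp lm n hn η j))⁻¹ •
    ∑ j : ZMod n, ENNReal.ofReal (Cweight lp lm n hn η j) • μt j

/-! ### Auxiliary lemmas -/

section Aux

def cyl (s : Finset ℤ) (g : ℤ → Fin 3) : Set (ℤ → Fin 3) := {ε | ∀ i ∈ s, ε i = g i}

lemma measurable_shiftMap : Measurable shiftMap := by
  apply measurable_pi_iff.2
  intro m
  exact measurable_pi_apply (m + 1)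

lemma measurableSet_cyl (s : Finset ℤ) (g : ℤ → Fin 3) : MeasurableSet (cyl s g) := by
  have : cyl s g = ⋂ i ∈ s, (fun ε : ℤ → Fin 3 => ε i) ⁻¹' {g i} := by
    ext ε; simp [cyl]
  rw [this]
  exact MeasurableSet.biInter s.countable_toSet fun i _ =>
    (measurable_pi_apply i) (measurableSet_singleton _)

lemma isPiSystem_cyl : IsPiSystem {S : Set (ℤ → Fin 3) | ∃ s g, S = cyl s g} := by
  rintro _ ⟨s, g, rfl⟩ _ ⟨s', g', rfl⟩ hne
  obtain ⟨ε, hε1, hε2⟩ := hne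
  refine ⟨s ∪ s', fun i => if i ∈ s then g i else g' i, ?_⟩
  ext x
  simp only [cyl, Set.mem_inter_iff, Set.mem_setOf_eq, Finset.mem_union]
  constructor
  · rintro ⟨h1, h2⟩ i hi
    by_cases his : i ∈ s
    · simp [his, h1 i his]
    · simp [his, h2 i (hi.resolve_left his)]
  · intro h
    constructor
    · intro i hi
      have := h i (Or.inl hi); simpa [hi] using this
    · intro i hi
      have := h i (Or.inr hi)
      by_cases his : i ∈ s
      · simp only [his, if_pos] at this
        rw [this, ← hε1 i his, hε2 i hi]
      · simpa [his] using this

lemma generateFrom_cyl :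
    (inferInstance : MeasurableSpace (ℤ → Fin 3)) =
      MeasurableSpace.generateFrom {S : Set (ℤ → Fin 3) | ∃ s g, S = cyl s g} := by
  apply le_antisymm
  · rw [show (inferInstance : MeasurableSpace (ℤ → Fin 3)) = MeasurableSpace.pi from rfl,
      MeasurableSpace.pi]
    apply iSup_le
    intro i
    rw [← measurable_iff_comap_le]
    intro A _
    have : (fun ε : ℤ → Fin 3 => ε i) ⁻¹' A = ⋃ c ∈ A, cyl {i} (fun _ => c) := by
      ext ε; simp [cyl]
    rw [this]
    exact MeasurableSet.biUnion A.to_countable fun c _ =>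
      MeasurableSpace.measurableSet_generateFrom ⟨{i}, fun _ => c, rfl⟩
  · rw [MeasurableSpace.generateFrom_le_iff]
    rintro _ ⟨s, g, rfl⟩
    exact measurableSet_cyl s g

noncomputable def zeta3 : ℂ := Complex.exp (-2 * Real.pi * Complex.I / 3)

lemma zeta3_pow_three : zeta3 ^ 3 = 1 := by
  rw [zeta3, ← Complex.exp_nat_mul]
  have : (3 : ℕ) * (-2 * (Real.pi:ℂ) * Complex.I / 3) = (-1 : ℤ) * (2 * Real.pi * Complex.I) := by
    push_cast; ring
  rw [this, Complex.exp_int_mul_two_pi_mul_I]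

lemma zeta3_ne_one : zeta3 ≠ 1 := by
  intro h
  rw [zeta3, Complex.exp_eq_one_iff] at h
  obtain ⟨m, hm⟩ := h
  have hpi : (Real.pi : ℂ) ≠ 0 := by exact_mod_cast Real.pi_ne_zero
  have hI : Complex.I ≠ 0 := Complex.I_ne_zero
  have h2 : (-2 : ℂ) * ((Real.pi:ℂ) * Complex.I) = (6 * m) * ((Real.pi:ℂ) * Complex.I) := by
    linear_combination 3 * hm
  have h3 : (-2 : ℂ) = 6 * m := mul_right_cancel₀ (mul_ne_zero hpi hI) h2
  have h4 : (6 * m : ℤ) = -2 := by exact_mod_cast h3.symm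
  omega

lemma zeta3_sum : 1 + zeta3 + zeta3 ^ 2 = 0 := by
  have h3 := zeta3_pow_three
  have hne := zeta3_ne_one
  have : (zeta3 - 1) * (1 + zeta3 + zeta3 ^ 2) = 0 := by linear_combination h3
  rcases mul_eq_zero.1 this with h | h
  · exact absurd (sub_eq_zero.1 h) hne
  · exact h

lemma conj_zeta3 : (starRingEnd ℂ) zeta3 = zeta3 ^ 2 := by
  have habs : Complex.normSq zeta3 = 1 := by
    rw [Complex.normSq_eq_norm_sq, zeta3, Complex.norm_exp]
    norm_num
  have h1 : zeta3 * (starRingEnd ℂ) zeta3 = 1 := by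
    rw [Complex.mul_conj, habs]; norm_num
  have h2 : zeta3 * zeta3 ^ 2 = 1 := by
    have := zeta3_pow_three; linear_combination this
  exact mul_left_cancel₀ (by intro h; rw [h] at h2; simp at h2) (h1.trans h2.symm)

lemma dft3_apply (j k : Fin 3) :
    dft3 j k = (((Real.sqrt 3)⁻¹ : ℝ) : ℂ) * zeta3 ^ (j.val * k.val) := by
  rw [dft3, zeta3, ← Complex.exp_nat_mul]
  congr 1
  push_cast
  ring

lemma dft3_mul_conjTranspose : dft3 * dft3.conjTranspose = 1 := by
  have h3 := zeta3_pow_three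
  have hsum := zeta3_sum
  have hc : (((Real.sqrt 3 : ℝ)) : ℂ)⁻¹ * (((Real.sqrt 3 : ℝ)) : ℂ)⁻¹ = 1/3 := by
    rw [← mul_inv]
    rw [show (((Real.sqrt 3 : ℝ)) : ℂ) * (((Real.sqrt 3 : ℝ)) : ℂ) = ((3:ℝ) : ℂ) by
      rw [← Complex.ofReal_mul, Real.mul_self_sqrt (by norm_num : (0:ℝ) ≤ 3)]]
    norm_num
  ext j k
  rw [Matrix.mul_apply, Fin.sum_univ_three]
  simp only [Matrix.conjTranspose_apply, dft3_apply, Complex.star_def, map_mul, map_pow,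
    Complex.conj_ofReal, conj_zeta3]
  fin_cases j <;> fin_cases k <;>
    norm_num [Matrix.one_apply, Fin.ext_iff, ← pow_mul]
  · linear_combination 3 * hc
  · linear_combination ((Real.sqrt 3:ℝ):ℂ)⁻¹^2 * hsum + ((Real.sqrt 3:ℝ):ℂ)⁻¹^2 * zeta3 * h3
  · linear_combination ((Real.sqrt 3:ℝ):ℂ)⁻¹^2 * hsum + ((Real.sqrt 3:ℝ):ℂ)⁻¹^2 * zeta3 * h3
      + ((Real.sqrt 3:ℝ):ℂ)⁻¹^2 * zeta3^2 * (zeta3^3 + 1) * h3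
  · linear_combination ((Real.sqrt 3:ℝ):ℂ)⁻¹^2 * hsum
  · linear_combination 3 * hc + ((Real.sqrt 3:ℝ):ℂ)⁻¹^2 * h3
      + ((Real.sqrt 3:ℝ):ℂ)⁻¹^2 * (zeta3^3 + 1) * h3
  · linear_combination ((Real.sqrt 3:ℝ):ℂ)⁻¹^2 * hsum + ((Real.sqrt 3:ℝ):ℂ)⁻¹^2 * zeta3^2 * h3
      + ((Real.sqrt 3:ℝ):ℂ)⁻¹^2 * zeta3 * (zeta3^6 + zeta3^3 + 1) * h3
  · linear_combination ((Real.sqrt 3:ℝ):ℂ)⁻¹^2 * hsum + ((Real.sqrt 3:ℝ):ℂ)⁻¹^2 * zeta3 * h3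
  · linear_combination ((Real.sqrt 3:ℝ):ℂ)⁻¹^2 * hsum + ((Real.sqrt 3:ℝ):ℂ)⁻¹^2 * zeta3 * h3
      + ((Real.sqrt 3:ℝ):ℂ)⁻¹^2 * zeta3^2 * (zeta3^3 + 1) * h3
  · linear_combination 3 * hc + ((Real.sqrt 3:ℝ):ℂ)⁻¹^2 * (zeta3^3 + 1) * h3
      + ((Real.sqrt 3:ℝ):ℂ)⁻¹^2 * (zeta3^9 + zeta3^6 + zeta3^3 + 1) * h3

lemma eigen_key (l : ℂ) (v : Fin 3 → ℂ) (hv : F3tilde.mulVec v = l • v) (e : Fin 3) :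
    ‖l‖ ^ 2 * PstarWeight v e = if e = 1 then 0 else Pweight v e := by
  have key : l • dft3.mulVec v = pi02.mulVec v := by
    rw [← Matrix.mulVec_smul, ← hv, Matrix.mulVec_mulVec, F3tilde, ← Matrix.mul_assoc,
      dft3_mul_conjTranspose, Matrix.one_mul]
  have he : pi02.mulVec v e = if e = 1 then 0 else v e := by
    fin_cases e <;> simp [pi02, Matrix.mulVec, dotProduct, Fin.sum_univ_three, Fin.ext_iff]
  have h2 : l * dft3.mulVec v e = if e = 1 then 0 else v e := by
    rw [← he, ← key]; rfl
  have h3 := congrArg (fun z => ‖z‖ ^ 2) h2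
  simp only [norm_mul, mul_pow] at h3
  rw [PstarWeight, h3]
  by_cases h : e = 1 <;> simp [h, Pweight]

lemma Pweight_nonneg (v : Fin 3 → ℂ) (e : Fin 3) : 0 ≤ Pweight v e := sq_nonneg _
lemma PstarWeight_nonneg (v : Fin 3 → ℂ) (e : Fin 3) : 0 ≤ PstarWeight v e := sq_nonneg _

/-- The one-site weight of `μ̃_{η,a}` at coordinate `m`. -/
noncomputable def Wfun (vp vm : Fin 3 → ℂ) {n : ℕ} (η : ZMod n → Bool) (a : ZMod n)
    (m : ℤ) (e : Fin 3) : ℝ :=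
  if 0 ≤ m then Pweight (if η (a + (m : ZMod n)) then vp else vm) e
  else PstarWeight (if η (a + (m : ZMod n)) then vp else vm) e

lemma Wfun_nonneg (vp vm : Fin 3 → ℂ) {n : ℕ} (η : ZMod n → Bool) (a : ZMod n)
    (m : ℤ) (e : Fin 3) : 0 ≤ Wfun vp vm η a m e := by
  rw [Wfun]; split <;> [exact Pweight_nonneg _ _; exact PstarWeight_nonneg _ _]

lemma Wfun_match (vp vm : Fin 3 → ℂ) {n : ℕ} (η : ZMod n → Bool) (a : ZMod n)
    (i : ℤ) (hi : i ≠ -1) (e : Fin 3) :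
    Wfun vp vm η a (i + 1) e = Wfun vp vm η (a + 1) i e := by
  have hidx : a + ((i + 1 : ℤ) : ZMod n) = (a + 1) + ((i : ℤ) : ZMod n) := by
    push_cast; ring
  by_cases h0 : (0:ℤ) ≤ i
  · have h1 : (0:ℤ) ≤ i + 1 := by omega
    simp only [Wfun, if_pos h0, if_pos h1, hidx]
  · have h1 : ¬ (0:ℤ) ≤ i + 1 := by omega
    simp only [Wfun, if_neg h0, if_neg h1, hidx]

lemma Wfun_zero (vp vm : Fin 3 → ℂ) {n : ℕ} (η : ZMod n → Bool) (a : ZMod n) (e : Fin 3) :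
    Wfun vp vm η a 0 e = Pweight (if η a then vp else vm) e := by
  have hidx : a + ((0 : ℤ) : ZMod n) = a := by push_cast; ring
  simp only [Wfun, if_pos le_rfl, hidx]

lemma Wfun_neg_one (vp vm : Fin 3 → ℂ) {n : ℕ} (η : ZMod n → Bool) (a : ZMod n) (e : Fin 3) :
    Wfun vp vm η (a + 1) (-1) e = PstarWeight (if η a then vp else vm) e := by
  have hidx : (a + 1) + ((-1 : ℤ) : ZMod n) = a := by push_cast; ring
  have h0 : ¬ ((0:ℤ) ≤ -1) := by norm_num
  simp only [Wfun, if_neg h0, hidx]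

/-- Part (a) as a standalone lemma. -/
lemma tilde_step (lp lm : ℂ) (hlp : lp ≠ 0) (hlm : lm ≠ 0) (vp vm : Fin 3 → ℂ)
    (hvp : F3tilde.mulVec vp = lp • vp) (hvm : F3tilde.mulVec vm = lm • vm)
    (n : ℕ) (hn : 0 < n) (η : ZMod n → Bool)
    (μt : ZMod n → Measure (ℤ → Fin 3)) (hfam : IsTildeFamily vp vm n hn η μt)
    (j : ZMod n) (S : Set (ℤ → Fin 3)) (hS : MeasurableSet S) :
    μt j (shiftMap ⁻¹' S ∩ {ε | ε 0 ≠ 1})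
      = ENNReal.ofReal (‖if η j then lp else lm‖ ^ 2) * μt (j + 1) S := by
  haveI : NeZero n := ⟨hn.ne'⟩
  have hprod : ∀ (a : ZMod n) (s : Finset ℤ) (g : ℤ → Fin 3),
      μt a (cyl s g) = ∏ i ∈ s, ENNReal.ofReal (Wfun vp vm η a i (g i)) :=
    fun a => (hfam a).2
  have hPM : ∀ a, IsProbabilityMeasure (μt a) := fun a => (hfam a).1
  set v : Fin 3 → ℂ := if η j then vp else vm with hv
  set l : ℂ := if η j then lp else lm with hl
  have hvl : F3tilde.mulVec v = l • v := by
    rw [hv, hl]; by_cases h : η j <;> simp [h, hvp, hvm]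
  have hlne : l ≠ 0 := by rw [hl]; by_cases h : η j <;> simp [h, hlp, hlm]
  have hek := eigen_key l v hvl
  have hP1 : PstarWeight v 1 = 0 := by
    have h := hek 1
    rw [if_pos rfl] at h
    have hne : ‖l‖ ^ 2 ≠ 0 := pow_ne_zero _ (norm_ne_zero_iff.mpr hlne)
    exact (mul_eq_zero.1 h).resolve_left hne
  -- the `P*` weights sum to one
  have hsumP : PstarWeight v 0 + PstarWeight v 1 + PstarWeight v 2 = 1 := by
    haveI := hPM (j + 1)
    have hU : (Set.univ : Set (ℤ → Fin 3)) = ⋃ e : Fin 3, cyl {(-1:ℤ)} (fun _ => e) := by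
      ext ε; simp [cyl]
    have hdisj : Pairwise (Function.onFun Disjoint fun e : Fin 3 => cyl {(-1:ℤ)} (fun _ => e)) := by
      intro a b hab
      simp only [Function.onFun, Set.disjoint_left]
      intro ε hεa hεb
      exact hab ((hεa (-1) (by simp)).symm.trans (hεb (-1) (by simp)))
    have h1 : (1 : ℝ≥0∞) = ∑ e : Fin 3, μt (j+1) (cyl {(-1:ℤ)} (fun _ => e)) := by
      rw [← tsum_fintype (L := SummationFilter.unconditional _), ← measure_iUnion hdisj (fun e => measurableSet_cyl _ _), ← hU,
        measure_univ]
    have h2 : ∀ e : Fin 3, μt (j+1) (cyl {(-1:ℤ)} (fun _ => e))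
        = ENNReal.ofReal (PstarWeight v e) := by
      intro e
      rw [hprod (j+1), Finset.prod_singleton, Wfun_neg_one]
    rw [Finset.sum_congr rfl (fun e _ => h2 e), Fin.sum_univ_three] at h1
    rw [← ENNReal.ofReal_add (PstarWeight_nonneg _ _) (PstarWeight_nonneg _ _),
      ← ENNReal.ofReal_add (add_nonneg (PstarWeight_nonneg _ _) (PstarWeight_nonneg _ _)) (PstarWeight_nonneg _ _)] at h1
    exact (ENNReal.ofReal_eq_one.1 h1.symm)
  have hkey02 : ENNReal.ofReal (Pweight v 0) + ENNReal.ofReal (Pweight v 2)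
      = ENNReal.ofReal (‖l‖ ^ 2) := by
    rw [← ENNReal.ofReal_add (Pweight_nonneg _ _) (Pweight_nonneg _ _)]
    congr 1
    have h0 := hek 0
    have h2 := hek 2
    rw [if_neg (by decide)] at h0
    rw [if_neg (by decide)] at h2
    linear_combination (-1) * h0 - h2 + (‖l‖ ^ 2) * hsumP
      - (‖l‖ ^ 2) * hP1
  have Mhole : MeasurableSet {ε : ℤ → Fin 3 | ε 0 ≠ 1} := by
    have : {ε : ℤ → Fin 3 | ε 0 ≠ 1} = (fun ε : ℤ → Fin 3 => ε 0) ⁻¹' {1}ᶜ := rfl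
    rw [this]
    exact (measurable_pi_apply 0) (measurableSet_singleton 1).compl
  -- key cylinder computation
  have key : ∀ (s : Finset ℤ) (g : ℤ → Fin 3),
      μt j (shiftMap ⁻¹' cyl s g ∩ {ε | ε 0 ≠ 1})
        = ENNReal.ofReal (‖l‖ ^ 2) * μt (j+1) (cyl s g) := by
    intro s g
    classical
    have hpre : shiftMap ⁻¹' cyl s g = cyl (s.image (· + 1)) (fun i => g (i - 1)) := by
      ext ε
      simp only [cyl, Set.mem_preimage, Set.mem_setOf_eq, Finset.mem_image, shiftMap]
      constructor
      · rintro h i ⟨m, hm, rfl⟩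
        simpa using h m hm
      · intro h i hi
        simpa using h (i+1) ⟨i, hi, rfl⟩
    set s' := s.image (· + 1 : ℤ → ℤ) with hs'
    set g' : ℤ → Fin 3 := fun i => g (i - 1) with hg'
    have hinj : ∀ x ∈ s, ∀ y ∈ s, x + 1 = y + 1 → x = y := by intro x _ y _ h; omega
    have hg'succ : ∀ i : ℤ, g' (i + 1) = g i := by intro i; simp [hg']
    have hreidx : ∀ (F : ℤ → Fin 3 → ℝ≥0∞),
        ∏ i ∈ s', F i (g' i) = ∏ i ∈ s, F (i+1) (g i) := by
      intro F
      rw [hs', Finset.prod_image hinj]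
      exact Finset.prod_congr rfl fun i _ => by rw [hg'succ]
    rw [hpre]
    by_cases hmem : (-1 : ℤ) ∈ s
    · have h0s' : (0:ℤ) ∈ s' := by
        rw [hs']; exact Finset.mem_image.2 ⟨-1, hmem, by ring⟩
      have hg'0 : g' 0 = g (-1) := by simp [hg']
      by_cases hg1 : g (-1) = 1
      · have hempty : cyl s' g' ∩ {ε : ℤ → Fin 3 | ε 0 ≠ 1} = ∅ := by
          ext ε
          simp only [Set.mem_inter_iff, Set.mem_empty_iff_false, iff_false, cyl,
            Set.mem_setOf_eq, not_and]
          intro h1 h2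
          exact h2 ((h1 0 h0s').trans (hg'0.trans hg1))
        rw [hempty, measure_empty, hprod (j+1) s g,
          ← Finset.mul_prod_erase s (fun i => ENNReal.ofReal (Wfun vp vm η (j+1) i (g i))) hmem]
        have hz : ENNReal.ofReal (Wfun vp vm η (j+1) (-1) (g (-1))) = 0 := by
          rw [Wfun_neg_one, ← hv, hg1, hP1, ENNReal.ofReal_zero]
        rw [hz, zero_mul, mul_zero]
      · have hsub : cyl s' g' ∩ {ε : ℤ → Fin 3 | ε 0 ≠ 1} = cyl s' g' := by
          rw [Set.inter_eq_left]
          intro ε hε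
          simp only [Set.mem_setOf_eq]
          rw [hε 0 h0s', hg'0]
          exact hg1
        rw [hsub, hprod j, hreidx (fun i e => ENNReal.ofReal (Wfun vp vm η j i e)),
          hprod (j+1) s g,
          ← Finset.mul_prod_erase s (fun i => ENNReal.ofReal (Wfun vp vm η j (i+1) (g i))) hmem,
          ← Finset.mul_prod_erase s (fun i => ENNReal.ofReal (Wfun vp vm η (j+1) i (g i))) hmem,
          ← mul_assoc]
        have hrest : ∏ i ∈ s.erase (-1), ENNReal.ofReal (Wfun vp vm η j (i+1) (g i))
            = ∏ i ∈ s.erase (-1), ENNReal.ofReal (Wfun vp vm η (j+1) i (g i)) :=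
          Finset.prod_congr rfl fun i hi => by
            rw [Wfun_match vp vm η j i (Finset.ne_of_mem_erase hi)]
        rw [hrest]
        congr 1
        have hm1 : (-1 : ℤ) + 1 = 0 := by ring
        rw [hm1, Wfun_zero, Wfun_neg_one, ← hv,
          ← ENNReal.ofReal_mul (by positivity)]
        congr 1
        have h := hek (g (-1))
        rw [if_neg hg1] at h
        exact h.symm
    · have h0s' : (0:ℤ) ∉ s' := by
        rw [hs']
        intro h
        obtain ⟨i, hi, hie⟩ := Finset.mem_image.1 h
        have : i = -1 := by omega
        exact hmem (this ▸ hi)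
      have hne3 : ∀ x : Fin 3, x ≠ 1 → x = 0 ∨ x = 2 := by decide
      have hsplit : cyl s' g' ∩ {ε : ℤ → Fin 3 | ε 0 ≠ 1}
          = cyl (insert 0 s') (Function.update g' 0 0)
            ∪ cyl (insert 0 s') (Function.update g' 0 2) := by
        ext ε
        simp only [cyl, Set.mem_inter_iff, Set.mem_setOf_eq, Set.mem_union, Finset.mem_insert]
        constructor
        · rintro ⟨h1, h2⟩
          rcases hne3 _ h2 with he | he
          · left
            rintro i (rfl | hi)
            · rw [he, Function.update_self]
            · rw [Function.update_of_ne (by rintro rfl; exact h0s' hi), h1 i hi]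
          · right
            rintro i (rfl | hi)
            · rw [he, Function.update_self]
            · rw [Function.update_of_ne (by rintro rfl; exact h0s' hi), h1 i hi]
        · have hcase : ∀ e : Fin 3, e ≠ 1 →
              (∀ i, i = 0 ∨ i ∈ s' → ε i = Function.update g' 0 e i) →
              (∀ i ∈ s', ε i = g' i) ∧ ε 0 ≠ 1 := by
            intro e he h
            constructor
            · intro i hi
              have := h i (Or.inr hi)
              rwa [Function.update_of_ne (by rintro rfl; exact h0s' hi)] at this
            · have := h 0 (Or.inl rfl)
              rw [Function.update_self] at this
              rw [this]
              exact he
          rintro (h | h)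
          · exact hcase 0 (by decide) h
          · exact hcase 2 (by decide) h
      have hdisj2 : Disjoint (cyl (insert 0 s') (Function.update g' 0 0))
          (cyl (insert 0 s') (Function.update g' 0 2)) := by
        rw [Set.disjoint_left]
        intro ε h1 h2
        have e1 := h1 0 (Finset.mem_insert_self 0 _)
        have e2 := h2 0 (Finset.mem_insert_self 0 _)
        rw [Function.update_self] at e1 e2
        rw [e1] at e2
        exact absurd e2 (by decide)
      rw [hsplit, measure_union hdisj2 (measurableSet_cyl _ _), hprod j, hprod j,
        Finset.prod_insert h0s', Finset.prod_insert h0s']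
      have hpp : ∀ e : Fin 3,
          ∏ i ∈ s', ENNReal.ofReal (Wfun vp vm η j i (Function.update g' 0 e i))
          = ∏ i ∈ s, ENNReal.ofReal (Wfun vp vm η (j+1) i (g i)) := by
        intro e
        rw [Finset.prod_congr rfl (fun i hi => by
          rw [Function.update_of_ne (by rintro rfl; exact h0s' hi)]),
          hreidx (fun i e => ENNReal.ofReal (Wfun vp vm η j i e))]
        exact Finset.prod_congr rfl fun i hi => by
          rw [Wfun_match vp vm η j i (fun h => hmem (h ▸ hi))]
      rw [hpp, hpp, Function.update_self, Function.update_self, Wfun_zero, Wfun_zero, ← hv,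
        hprod (j+1) s g, ← add_mul, hkey02]
  -- conclude via uniqueness on the cylinder π-system
  haveI := hPM j
  set ν := ((μt j).restrict {ε : ℤ → Fin 3 | ε 0 ≠ 1}).map shiftMap with hν
  have hνapp : ∀ T : Set (ℤ → Fin 3), MeasurableSet T →
      ν T = μt j (shiftMap ⁻¹' T ∩ {ε | ε 0 ≠ 1}) := by
    intro T hT
    rw [hν, Measure.map_apply measurable_shiftMap hT,
      Measure.restrict_apply (measurable_shiftMap hT)]
  haveI : IsFiniteMeasure ν := by
    constructor
    rw [hνapp _ MeasurableSet.univ]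
    exact lt_of_le_of_lt (measure_mono (Set.inter_subset_left)) (measure_lt_top _ _)
  have huniv : (Set.univ : Set (ℤ → Fin 3)) = cyl ∅ (fun _ => 0) := by
    ext ε; simp [cyl]
  have main : ν = ENNReal.ofReal (‖l‖ ^ 2) • μt (j+1) := by
    refine ext_of_generate_finite _ generateFrom_cyl isPiSystem_cyl ?_ ?_
    · rintro _ ⟨s, g, rfl⟩
      rw [hνapp _ (measurableSet_cyl s g), key s g, Measure.smul_apply, smul_eq_mul]
    · rw [hνapp _ MeasurableSet.univ, huniv, key ∅ (fun _ => 0),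
        Measure.smul_apply, smul_eq_mul]
  calc μt j (shiftMap ⁻¹' S ∩ {ε | ε 0 ≠ 1}) = ν S := (hνapp S hS).symm
    _ = ENNReal.ofReal (‖l‖ ^ 2) * μt (j+1) S := by
        rw [main, Measure.smul_apply, smul_eq_mul]


lemma prod_range_zmod {n : ℕ} [NeZero n] (f : ZMod n → ℝ) :
    ∏ m ∈ Finset.range n, f (m : ZMod n) = ∏ x : ZMod n, f x := by
  refine Finset.prod_nbij' (fun m => (m : ZMod n)) (fun x => x.val)
    (fun a _ => Finset.mem_univ _) (fun a _ => Finset.mem_range.2 (ZMod.val_lt a))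
    (fun a ha => ZMod.val_cast_of_lt (Finset.mem_range.1 ha))
    (fun a _ => by simp [ZMod.natCast_val, ZMod.cast_id]) (fun a _ => rfl)

lemma LamEta_pos (lp lm : ℂ) (hlp : lp ≠ 0) (hlm : lm ≠ 0) (n : ℕ) (hn : 0 < n)
    (η : ZMod n → Bool) : 0 < LamEta lp lm n hn η :=
  mul_pos (Real.rpow_pos_of_pos (norm_pos_iff.mpr hlm) _)
    (Real.rpow_pos_of_pos (norm_pos_iff.mpr hlp) _)

lemma prodLam (lp lm : ℂ) (hlp : lp ≠ 0) (hlm : lm ≠ 0) (n : ℕ) (hn : 0 < n)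
    (η : ZMod n → Bool) :
    ∏ m ∈ Finset.range n, ‖if η (m : ZMod n) then lp else lm‖ ^ 2
      = LamEta lp lm n hn η ^ n := by
  haveI : NeZero n := ⟨hn.ne'⟩
  classical
  set k := (Finset.univ.filter fun j : ZMod n => η j = true).card with hk
  have hkn : k ≤ n := by
    calc k ≤ Finset.univ.card := Finset.card_filter_le _ _
    _ = n := by rw [Finset.card_univ, ZMod.card]
  have hA : (0:ℝ) < ‖lm‖ := norm_pos_iff.mpr hlm
  have hB : (0:ℝ) < ‖lp‖ := norm_pos_iff.mpr hlp
  have hL : ∏ m ∈ Finset.range n, ‖if η (m : ZMod n) then lp else lm‖ ^ 2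
      = (‖lp‖ ^ 2) ^ k * (‖lm‖ ^ 2) ^ (n - k) := by
    rw [prod_range_zmod (f := fun x => ‖if η x then lp else lm‖ ^ 2)]
    rw [← Finset.prod_filter_mul_prod_filter_not Finset.univ (fun x => η x = true)]
    congr 1
    · rw [Finset.prod_congr rfl (fun x hx => by
        rw [if_pos (of_decide_eq_true (by simpa using (Finset.mem_filter.1 hx).2))]),
        Finset.prod_const, hk]
    · rw [Finset.prod_congr rfl (fun x hx => by
        have hx' := (Finset.mem_filter.1 hx).2
        rw [if_neg (by simpa using hx')]), Finset.prod_const]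
      congr 1
      have := Finset.card_filter_add_card_filter_not
        (s := (Finset.univ : Finset (ZMod n))) (p := fun x => η x = true)
      rw [Finset.card_univ, ZMod.card] at this
      omega
  rw [hL, LamEta, mul_pow]
  have htv : tplus n hn η = (k : ℝ) / n := rfl
  have hncast : ((n:ℝ)) ≠ 0 := Nat.cast_ne_zero.2 hn.ne'
  have e1 : (‖lm‖ ^ (2 * (1 - tplus n hn η))) ^ n
      = ‖lm‖ ^ (2 * (n - k)) := by
    rw [← Real.rpow_natCast (‖lm‖ ^ (2 * (1 - tplus n hn η))) n,
      ← Real.rpow_mul hA.le]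
    rw [show 2 * (1 - tplus n hn η) * (n:ℝ) = ((2 * (n - k) : ℕ) : ℝ) by
      rw [htv]; push_cast [Nat.cast_sub hkn]; field_simp]
    rw [Real.rpow_natCast]
  have e2 : (‖lp‖ ^ (2 * tplus n hn η)) ^ n
      = ‖lp‖ ^ (2 * k) := by
    rw [← Real.rpow_natCast (‖lp‖ ^ (2 * tplus n hn η)) n,
      ← Real.rpow_mul hB.le]
    rw [show 2 * tplus n hn η * (n:ℝ) = ((2 * k : ℕ) : ℝ) by
      rw [htv]; push_cast; field_simp]
    rw [Real.rpow_natCast]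
  rw [e1, e2, ← pow_mul, ← pow_mul]
  ring

lemma Crec (lp lm : ℂ) (hlp : lp ≠ 0) (hlm : lm ≠ 0) (n : ℕ) (hn : 0 < n)
    (η : ZMod n → Bool) (j : ZMod n) :
    Cweight lp lm n hn η j * ‖if η j then lp else lm‖ ^ 2
      = LamEta lp lm n hn η * Cweight lp lm n hn η (j + 1) := by
  haveI : NeZero n := ⟨hn.ne'⟩
  have hΛ : 0 < LamEta lp lm n hn η := LamEta_pos lp lm hlp hlm n hn η
  have hjval : j.val < n := ZMod.val_lt j
  have hjcast : ((j.val : ℕ) : ZMod n) = j := by simp [ZMod.natCast_val, ZMod.cast_id]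
  have hj1cast : (j + 1 : ZMod n) = ((j.val + 1 : ℕ) : ZMod n) := by
    rw [Nat.cast_add, Nat.cast_one, hjcast]
  by_cases htop : j.val + 1 = n
  · have hval0 : (j + 1).val = 0 := by
      rw [hj1cast, htop, ZMod.natCast_self, ZMod.val_zero]
    have hC1 : Cweight lp lm n hn η (j + 1) = 1 := by
      rw [Cweight, hval0, Finset.range_zero, Finset.prod_empty]
    have hone : ∏ m ∈ Finset.range n,
        (‖if η (m : ZMod n) then lp else lm‖ ^ 2 / LamEta lp lm n hn η) = 1 := by
      rw [Finset.prod_div_distrib, prodLam lp lm hlp hlm n hn η, Finset.prod_const,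
        Finset.card_range, div_self (pow_ne_zero _ hΛ.ne')]
    rw [show Finset.range n = Finset.range (j.val + 1) from by rw [htop]] at hone
    rw [Finset.prod_range_succ, hjcast] at hone
    rw [hC1, mul_one]
    have : Cweight lp lm n hn η j * (‖if η j then lp else lm‖ ^ 2
        / LamEta lp lm n hn η) = 1 := hone
    field_simp at this
    linarith [this]
  · have hval1 : (j + 1).val = j.val + 1 := by
      rw [hj1cast, ZMod.val_natCast, Nat.mod_eq_of_lt (by omega)]
    simp only [Cweight]
    rw [hval1, Finset.prod_range_succ, hjcast]
    have : Cweight lp lm n hn η j = ∏ m ∈ Finset.range j.val,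
        (‖if η (m : ZMod n) then lp else lm‖ ^ 2 / LamEta lp lm n hn η) := rfl
    rw [← this]
    field_simp

end Aux

/-- (a) Each `μ̃_{η,j}` satisfies
`μ̃_{η,j}(σ̂⁻¹S ∩ {ε₀ ≠ 1}) = |λ_{η(j)}|²·μ̃_{η,j+1}(S)`.  (b) `μ_η` is a probability
measure and an eigenmeasure of the open shift with decay rate `Λ_η`. -/
theorem muEta_eigenmeasure
    (lp lm : ℂ) (hlp : lp ≠ 0) (hlm : lm ≠ 0) (vp vm : Fin 3 → ℂ)
    (hvp : F3tilde.mulVec vp = lp • vp) (hvm : F3tilde.mulVec vm = lm • vm)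
    (hvpu : ∑ e, ‖vp e‖ ^ 2 = 1) (hvmu : ∑ e, ‖vm e‖ ^ 2 = 1)
    (n : ℕ) (hn : 0 < n) (η : ZMod n → Bool)
    (μt : ZMod n → Measure (ℤ → Fin 3)) (hfam : IsTildeFamily vp vm n hn η μt) :
    (∀ (j : ZMod n) (S : Set (ℤ → Fin 3)), MeasurableSet S →
        μt j (shiftMap ⁻¹' S ∩ {ε | ε 0 ≠ 1})
          = ENNReal.ofReal (‖if η j then lp else lm‖ ^ 2) * μt (j + 1) S) ∧
    IsProbabilityMeasure (muEta lp lm n hn η μt) ∧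
    ∀ S : Set (ℤ → Fin 3), MeasurableSet S →
      muEta lp lm n hn η μt (shiftMap ⁻¹' S ∩ {ε | ε 0 ≠ 1})
        = ENNReal.ofReal (LamEta lp lm n hn η) * muEta lp lm n hn η μt S := by
  haveI : NeZero n := ⟨hn.ne'⟩
  have parta : ∀ (j : ZMod n) (S : Set (ℤ → Fin 3)), MeasurableSet S →
      μt j (shiftMap ⁻¹' S ∩ {ε | ε 0 ≠ 1})
        = ENNReal.ofReal (‖if η j then lp else lm‖ ^ 2) * μt (j + 1) S :=
    fun j S hS => tilde_step lp lm hlp hlm vp vm hvp hvm n hn η μt hfam j S hS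
  have hPM : ∀ a, IsProbabilityMeasure (μt a) := fun a => (hfam a).1
  have hΛ : 0 < LamEta lp lm n hn η := LamEta_pos lp lm hlp hlm n hn η
  have hCpos : ∀ j : ZMod n, 0 < Cweight lp lm n hn η j := by
    intro j
    refine Finset.prod_pos fun m _ => div_pos (pow_pos ?_ 2) hΛ
    split <;> [exact norm_pos_iff.mpr hlp; exact norm_pos_iff.mpr hlm]
  set N := ∑ j : ZMod n, Cweight lp lm n hn η j with hNdef
  have hNpos : 0 < N := Finset.sum_pos (fun j _ => hCpos j) Finset.univ_nonempty
  have hofN : ENNReal.ofReal N ≠ 0 := ne_of_gt (ENNReal.ofReal_pos.2 hNpos)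
  have hsumC : ∑ j : ZMod n, ENNReal.ofReal (Cweight lp lm n hn η j) = ENNReal.ofReal N := by
    rw [hNdef, ENNReal.ofReal_sum_of_nonneg (fun j _ => (hCpos j).le)]
  have happ : ∀ T : Set (ℤ → Fin 3), muEta lp lm n hn η μt T
      = (ENNReal.ofReal N)⁻¹
          * ∑ j : ZMod n, ENNReal.ofReal (Cweight lp lm n hn η j) * μt j T := by
    intro T
    show ((ENNReal.ofReal (∑ j : ZMod n, Cweight lp lm n hn η j))⁻¹
      • ∑ j : ZMod n, ENNReal.ofReal (Cweight lp lm n hn η j) • μt j) T = _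
    rw [Measure.smul_apply, smul_eq_mul, ← hNdef]
    congr 1
    rw [Measure.coe_finset_sum, Finset.sum_apply]
    exact Finset.sum_congr rfl fun j _ => by rw [Measure.smul_apply, smul_eq_mul]
  refine ⟨parta, ?_, ?_⟩
  · constructor
    rw [happ Set.univ]
    have : ∀ j : ZMod n, μt j Set.univ = 1 := fun j => (hPM j).measure_univ
    rw [Finset.sum_congr rfl fun j _ => by rw [this j, mul_one]]
    rw [hsumC]
    exact ENNReal.inv_mul_cancel hofN ENNReal.ofReal_ne_top
  · intro S hS
    rw [happ, happ]
    have hterm : ∀ j : ZMod n,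
        ENNReal.ofReal (Cweight lp lm n hn η j) * μt j (shiftMap ⁻¹' S ∩ {ε | ε 0 ≠ 1})
          = ENNReal.ofReal (LamEta lp lm n hn η)
            * (ENNReal.ofReal (Cweight lp lm n hn η (j+1)) * μt (j+1) S) := by
      intro j
      rw [parta j S hS, ← mul_assoc, ← ENNReal.ofReal_mul (hCpos j).le,
        Crec lp lm hlp hlm n hn η j, ENNReal.ofReal_mul hΛ.le, mul_assoc]
    rw [Finset.sum_congr rfl fun j _ => hterm j, ← Finset.mul_sum]
    have hre : ∑ j : ZMod n, ENNReal.ofReal (Cweight lp lm n hn η (j+1)) * μt (j+1) S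
        = ∑ j : ZMod n, ENNReal.ofReal (Cweight lp lm n hn η j) * μt j S :=
      Equiv.sum_comp (Equiv.addRight (1 : ZMod n))
        (fun a => ENNReal.ofReal (Cweight lp lm n hn η a) * μt a S)
    rw [hre]
    ring
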